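/- Let G be a finite bipartite graph with bipartition (V1, V2), where |V1| = n ≥ 1 and |V2| = m ≥ 1. Suppose there are integers k and r with k > ⌈m/2⌉ and r > ⌈n/2⌉ such that every vertex of V1 has degree at least k and every vertex of V2 has degree at least r. Then G admits a rainbow coloring with 12 colors, i.e., rc(G) ≤ 12. -/

import Mathlib

open SimpleGraph Finset

variable {V : Type*}

/-- `o` is an orientation of `G`: each edge of `G` gets exactly one direction. -/
def IsOrientation (G : SimpleGraph V) (o : V → V → Prop) : Prop :=
  (∀ x y, o x y → G.Adj x y) ∧ (∀ x y, G.Adj x y → (o x y ∨ o y x)) ∧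
    (∀ x y, o x y → ¬ o y x)

/-- There is a directed path (with respect to `o`) from `x` to `y` of length at most `n`. -/
def DPathLE (o : V → V → Prop) (n : ℕ) (x y : V) : Prop :=
  ∃ m ≤ n, ∃ f : ℕ → V, f 0 = x ∧ f m = y ∧ (∀ i < m, o (f i) (f (i + 1))) ∧
    (∀ i ≤ m, ∀ j ≤ m, f i = f j → i = j)

/-- `G` admits an orientation of radius at most `R`. -/
def OrientRadiusLE (G : SimpleGraph V) (R : ℕ) : Prop :=
  ∃ o : V → V → Prop, IsOrientation G o ∧
    ∃ u : V, ∀ v : V, DPathLE o R u v ∧ DPathLE o R v u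

/-- `G` admits an orientation of diameter at most `D`. -/
def OrientDiamLE (G : SimpleGraph V) (D : ℕ) : Prop :=
  ∃ o : V → V → Prop, IsOrientation G o ∧ ∀ x y : V, DPathLE o D x y

/-- The edge `e` lies on a cycle of `G` of length at most `n`. -/
def InCycleLE (G : SimpleGraph V) (e : Sym2 V) (n : ℕ) : Prop :=
  ∃ (v : V) (c : G.Walk v v), c.IsCycle ∧ e ∈ c.edges ∧ c.length ≤ n

/-- `G` is bridgeless: no edge is a cut edge. -/
def Bridgeless (G : SimpleGraph V) : Prop :=
  ∀ e ∈ G.edgeSet, ¬ G.IsBridge e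

/-- `c` is a rainbow `k`-edge-coloring of `G`: every two distinct vertices are joined
by a path whose edges receive pairwise distinct colors. -/
def IsRainbowColoring (G : SimpleGraph V) (k : ℕ) (c : Sym2 V → Fin k) : Prop :=
  ∀ x y : V, x ≠ y → ∃ p : G.Walk x y, p.IsPath ∧ (p.edges.map c).Nodup

/-- The rainbow connection number of `G` is at most `k`. -/
def RcLE (G : SimpleGraph V) (k : ℕ) : Prop :=
  ∃ c : Sym2 V → Fin k, IsRainbowColoring G k c

/-- A bipartite graph with parts of sizes `n, m ≥ 1` in which every vertex of
`V1` has degree `≥ k > ⌈m/2⌉` and every vertex of `V2` has degree `≥ r > ⌈n/2⌉` admits a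
rainbow coloring with `12` colors, i.e. `rc(G) ≤ 12`. -/
theorem bipartite_rc_le_twelve [Fintype V] (G : SimpleGraph V) [DecidableRel G.Adj]
    (V1 V2 : Finset V) (hdisj : Disjoint V1 V2) (hcover : ∀ v : V, v ∈ V1 ∨ v ∈ V2)
    (hbip : ∀ x y : V, G.Adj x y → (x ∈ V1 ∧ y ∈ V2) ∨ (x ∈ V2 ∧ y ∈ V1))
    (n m : ℕ) (hn : V1.card = n) (hm : V2.card = m) (hn1 : 1 ≤ n) (hm1 : 1 ≤ m)
    (k r : ℕ) (hk : (m + 1) / 2 < k) (hr : (n + 1) / 2 < r)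
    (hdeg1 : ∀ x ∈ V1, k ≤ G.degree x) (hdeg2 : ∀ y ∈ V2, r ≤ G.degree y) :
    RcLE G 12 := by
  classical
  have hV21 : ∀ {y : V}, y ∈ V2 → y ∉ V1 := fun hy => (Finset.disjoint_right.mp hdisj) hy
  have adj12 : ∀ {x y : V}, x ∈ V1 → G.Adj x y → y ∈ V2 := by
    intro x y hx h
    rcases hbip x y h with ⟨_, h2⟩ | ⟨h1, _⟩
    · exact h2
    · exact absurd hx (hV21 h1)
  have adj21 : ∀ {x y : V}, x ∈ V2 → G.Adj x y → y ∈ V1 := by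
    intro x y hx h
    rcases hbip x y h with ⟨h1, _⟩ | ⟨_, h2⟩
    · exact absurd h1 (hV21 hx)
    · exact h2
  obtain ⟨u, hu⟩ : V1.Nonempty := Finset.card_pos.mp (by rw [hn]; omega)
  have hk2 : 2 ≤ k := by omega
  have hr2 : 2 ≤ r := by omega
  obtain ⟨w, hw⟩ : ∃ w, G.Adj u w := by
    rw [← SimpleGraph.degree_pos_iff_exists_adj]
    have := hdeg1 u hu; omega
  have hwV2 : w ∈ V2 := adj12 hu hw
  have nbrV2 : ∀ {x : V}, x ∈ V1 → G.neighborFinset x ⊆ V2 := by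
    intro x hx z hz
    exact adj12 hx ((SimpleGraph.mem_neighborFinset G x z).mp hz)
  have nbrV1 : ∀ {y : V}, y ∈ V2 → G.neighborFinset y ⊆ V1 := by
    intro y hy z hz
    exact adj21 hy ((SimpleGraph.mem_neighborFinset G y z).mp hz)
  have fact1 : ∀ x ∈ V1, 2 ≤ ((G.neighborFinset x) ∩ (G.neighborFinset u)).card := by
    intro x hx
    have h1 : ((G.neighborFinset x) ∪ (G.neighborFinset u)).card ≤ m := by
      rw [← hm]
      exact Finset.card_le_card (Finset.union_subset (nbrV2 hx) (nbrV2 hu))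
    have h2 := Finset.card_union_add_card_inter (G.neighborFinset x) (G.neighborFinset u)
    have h3 : k ≤ (G.neighborFinset x).card := hdeg1 x hx
    have h4 : k ≤ (G.neighborFinset u).card := hdeg1 u hu
    omega
  have fact2 : ∀ y ∈ V2, 2 ≤ ((G.neighborFinset y) ∩ (G.neighborFinset w)).card := by
    intro y hy
    have h1 : ((G.neighborFinset y) ∪ (G.neighborFinset w)).card ≤ n := by
      rw [← hn]
      exact Finset.card_le_card (Finset.union_subset (nbrV1 hy) (nbrV1 hwV2))
    have h2 := Finset.card_union_add_card_inter (G.neighborFinset y) (G.neighborFinset w)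
    have h3 : r ≤ (G.neighborFinset y).card := hdeg2 y hy
    have h4 : r ≤ (G.neighborFinset w).card := hdeg2 w hwV2
    omega
  -- the function α : each vertex of V1 \ {u} designates a neighbour in N(u) \ {w}
  have hαex : ∀ x : V, ∃ a : V, (x ∈ V1 ∧ x ≠ u) → (G.Adj x a ∧ G.Adj u a ∧ a ≠ w) := by
    intro x
    by_cases hx : x ∈ V1 ∧ x ≠ u
    · have h2 : 1 < ((G.neighborFinset x) ∩ (G.neighborFinset u)).card := by
        have := fact1 x hx.1; omega
      obtain ⟨a, ha, haw⟩ := Finset.exists_mem_ne h2 w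
      rw [Finset.mem_inter, SimpleGraph.mem_neighborFinset, SimpleGraph.mem_neighborFinset] at ha
      exact ⟨a, fun _ => ⟨ha.1, ha.2, haw⟩⟩
    · exact ⟨x, fun h => absurd h hx⟩
  choose α hα using hαex
  -- blocked vertices
  set Blk : V → Prop := fun y => ∀ b : V, G.Adj y b → G.Adj w b → b ≠ u → α b = y with hBlkdef
  have blkA : ∀ {y : V}, y ∈ V2 → y ≠ w → Blk y → G.Adj u y := by
    intro y hy hyw hblk
    have h2 : 1 < ((G.neighborFinset y) ∩ (G.neighborFinset w)).card := by
      have := fact2 y hy; omega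
    obtain ⟨b, hb, hbu⟩ := Finset.exists_mem_ne h2 u
    rw [Finset.mem_inter, SimpleGraph.mem_neighborFinset, SimpleGraph.mem_neighborFinset] at hb
    have hbV1 : b ∈ V1 := adj21 hy hb.1
    have hspec := hα b ⟨hbV1, hbu⟩
    have hblk' : ∀ b : V, G.Adj y b → G.Adj w b → b ≠ u → α b = y := hblk
    have hab : α b = y := hblk' b hb.1 hb.2 hbu
    rw [← hab]
    exact hspec.2.1
  -- bt : designated entry for (blocked) vertices of V2
  have hbtex : ∀ y : V, ∃ b : V, (y ∈ V2 ∧ y ≠ w) → (G.Adj y b ∧ G.Adj w b ∧ b ≠ u) := by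
    intro y
    by_cases hy : y ∈ V2 ∧ y ≠ w
    · have h2 : 1 < ((G.neighborFinset y) ∩ (G.neighborFinset w)).card := by
        have := fact2 y hy.1; omega
      obtain ⟨b, hb, hbu⟩ := Finset.exists_mem_ne h2 u
      rw [Finset.mem_inter, SimpleGraph.mem_neighborFinset, SimpleGraph.mem_neighborFinset] at hb
      exact ⟨b, fun _ => ⟨hb.1, hb.2, hbu⟩⟩
    · exact ⟨y, fun h => absurd h hy⟩
  choose bt hbt using hbtex
  -- β : entry for non-blocked vertices of V2, avoiding α-edges
  have hβex : ∀ y : V, ∃ b : V, (y ∈ V2 ∧ y ≠ w ∧ ¬ Blk y) →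
      (G.Adj y b ∧ G.Adj w b ∧ b ≠ u ∧ α b ≠ y) := by
    intro y
    by_cases hy : y ∈ V2 ∧ y ≠ w ∧ ¬ Blk y
    · have h : ¬ ∀ b : V, G.Adj y b → G.Adj w b → b ≠ u → α b = y := hy.2.2
      push_neg at h
      obtain ⟨b, h1, h2, h3, h4⟩ := h
      exact ⟨b, fun _ => ⟨h1, h2, h3, h4⟩⟩
    · exact ⟨y, fun h => absurd h hy⟩
  choose β hβ using hβex
  -- γ : second designated neighbour of vertices of V1 \ {u}
  have hγex : ∀ x : V, ∃ q : V, (x ∈ V1 ∧ x ≠ u) → (G.Adj x q ∧ q ≠ α x) := by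
    intro x
    by_cases hx : x ∈ V1 ∧ x ≠ u
    · have h2 : 1 < (G.neighborFinset x).card := by
        have h3 : k ≤ (G.neighborFinset x).card := hdeg1 x hx.1
        omega
      obtain ⟨q, hq, hqa⟩ := Finset.exists_mem_ne h2 (α x)
      exact ⟨q, fun _ => ⟨(SimpleGraph.mem_neighborFinset G x q).mp hq, hqa⟩⟩
    · exact ⟨x, fun h => absurd h hx⟩
  choose γ hγ using hγex
  -- bb : an entry into B avoiding β, for vertices of V2 not adjacent to u
  have hbbex : ∀ s : V, ∃ b : V, (s ∈ V2 ∧ ¬ G.Adj u s) →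
      (G.Adj s b ∧ G.Adj w b ∧ b ≠ β s ∧ b ≠ u) := by
    intro s
    by_cases hs : s ∈ V2 ∧ ¬ G.Adj u s
    · have h2 : 1 < ((G.neighborFinset s) ∩ (G.neighborFinset w)).card := by
        have := fact2 s hs.1; omega
      obtain ⟨b, hb, hbβ⟩ := Finset.exists_mem_ne h2 (β s)
      rw [Finset.mem_inter, SimpleGraph.mem_neighborFinset, SimpleGraph.mem_neighborFinset] at hb
      have hbu : b ≠ u := by rintro rfl; exact hs.2 hb.1.symm
      exact ⟨b, fun _ => ⟨hb.1, hb.2, hbβ, hbu⟩⟩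
    · exact ⟨s, fun h => absurd h hs⟩
  choose bb hbb using hbbex
  -- the colouring
  set d : V → V → Fin 12 := fun x y =>
    if x = u then (if y = w then 6 else if Blk y then 11 else 0)
    else if y = w then 7
    else if ¬ G.Adj w x ∧ γ x = y then 9
    else if Blk y ∧ bt y = x then 5
    else if α x = y then 1
    else if ¬ Blk y ∧ β y = x then 8
    else 4 with hd
  set c : Sym2 V → Fin 12 := Sym2.lift ⟨fun p q =>
      if p ∈ V1 then (if q ∈ V1 then 4 else d p q) else if q ∈ V1 then d q p else 4,
    by intro p q; by_cases hp : p ∈ V1 <;> by_cases hq : q ∈ V1 <;> simp [hp, hq]⟩ with hcdef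
  have hce : ∀ x y : V, x ∈ V1 → G.Adj x y → c s(x, y) = d x y ∧ c s(y, x) = d x y := by
    intro x y hx hxy
    have hy : y ∉ V1 := hV21 (adj12 hx hxy)
    constructor
    · rw [hcdef, Sym2.lift_mk]; simp [hx, hy]
    · rw [hcdef, Sym2.lift_mk]; simp [hx, hy]
  -- colour evaluation lemmas
  have S1 : d u w = 6 := by simp [hd]
  have S2 : ∀ y : V, y ≠ w → Blk y → d u y = 11 := by
    intro y h1 h2; simp [hd, h1, h2]
  have S3 : ∀ y : V, y ≠ w → ¬ Blk y → d u y = 0 := by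
    intro y h1 h2; simp [hd, h1, h2]
  have S4 : ∀ x : V, x ≠ u → d x w = 7 := by
    intro x h1; simp [hd, h1]
  have zsplit : ∀ a : V, a ≠ w → (d u a = 0 ∨ d u a = 11) := by
    intro a ha
    by_cases h : Blk a
    · exact Or.inr (S2 a ha h)
    · exact Or.inl (S3 a ha h)
  have S5 : ∀ x : V, x ∈ V1 → x ≠ u →
      (d x (α x) = 1 ∨ (d x (α x) = 5 ∧ Blk (α x) ∧ G.Adj w x)) := by
    intro x hx hxu
    obtain ⟨ha1, ha2, ha3⟩ := hα x ⟨hx, hxu⟩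
    have hαV2 : α x ∈ V2 := adj12 hu ha2
    have hne9 : ¬ (¬ G.Adj w x ∧ γ x = α x) := by
      rintro ⟨-, h⟩; exact (hγ x ⟨hx, hxu⟩).2 h
    by_cases h5 : Blk (α x) ∧ bt (α x) = x
    · right
      have hbtspec := hbt (α x) ⟨hαV2, ha3⟩
      refine ⟨?_, h5.1, by rw [← h5.2]; exact hbtspec.2.1⟩
      simp [hd, hxu, ha3, hne9, h5.1, h5.2]
    · left
      simp [hd, hxu, ha3, hne9, h5]
  have S6 : ∀ y : V, y ∈ V2 → y ≠ w → ¬ Blk y → d (β y) y = 8 := by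
    intro y hy hyw hnb
    obtain ⟨h1, h2, h3, h4⟩ := hβ y ⟨hy, hyw, hnb⟩
    simp [hd, h2, h3, h4, hnb, hyw]
  have S7 : ∀ y : V, y ∈ V2 → y ≠ w → Blk y → d (bt y) y = 5 := by
    intro y hy hyw hb
    obtain ⟨h1, h2, h3⟩ := hbt y ⟨hy, hyw⟩
    simp [hd, h2, h3, hb, hyw]
  have S8 : ∀ x : V, x ∈ V1 → x ≠ u → ¬ G.Adj w x → d x (γ x) = 9 := by
    intro x hx hxu hwx
    obtain ⟨hg1, hg2⟩ := hγ x ⟨hx, hxu⟩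
    have hgw : γ x ≠ w := by rintro h; exact hwx (h ▸ hg1).symm
    simp [hd, hxu, hgw, hwx]
  have S9 : ∀ s b : V, s ∈ V2 → ¬ G.Adj u s → G.Adj s b → G.Adj w b → b ≠ β s → d b s = 4 := by
    intro s b hs hus hsb hwb hbβ
    have hbu : b ≠ u := by rintro rfl; exact hus hsb.symm
    have hsw : s ≠ w := by rintro rfl; exact hus hw
    have hbV1 : b ∈ V1 := adj21 hs hsb
    have hnblk : ¬ Blk s := fun hb => hus (blkA hs hsw hb)
    have hαb : α b ≠ s := by
      intro h
      exact hus (h ▸ (hα b ⟨hbV1, hbu⟩).2.1)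
    have hβs : β s ≠ b := fun h => hbβ h.symm
    simp [hd, hbu, hsw, hwb, hnblk, hαb, hβs]
  -- walk builders
  have OUT_w : ∃ q : G.Walk u w, q.edges.map c = [6] := by
    refine ⟨.cons hw .nil, ?_⟩
    have e1 : c s(u, w) = 6 := ((hce u w hu hw).1).trans S1
    simp only [SimpleGraph.Walk.edges_cons, SimpleGraph.Walk.edges_nil, List.map_cons,
      List.map_nil, e1]
  have OUT_B : ∀ t : V, G.Adj w t → t ≠ u → ∃ q : G.Walk u t, q.edges.map c = [6, 7] := by
    intro t hwt htu
    have htV1 : t ∈ V1 := adj21 hwV2 hwt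
    refine ⟨.cons hw (.cons hwt .nil), ?_⟩
    have e1 : c s(u, w) = 6 := ((hce u w hu hw).1).trans S1
    have e2 : c s(w, t) = 7 := ((hce t w htV1 hwt.symm).2).trans (S4 t htu)
    simp only [SimpleGraph.Walk.edges_cons, SimpleGraph.Walk.edges_nil, List.map_cons,
      List.map_nil, e1, e2]
  have OUT_V2 : ∀ t : V, t ∈ V2 → t ≠ w → ¬ Blk t → ∃ q : G.Walk u t,
      q.edges.map c = [6, 7, 8] := by
    intro t ht htw hnb
    obtain ⟨hb1, hb2, hb3, hb4⟩ := hβ t ⟨ht, htw, hnb⟩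
    have hbV1 : β t ∈ V1 := adj21 ht hb1
    refine ⟨.cons hw (.cons hb2 (.cons hb1.symm .nil)), ?_⟩
    have e1 : c s(u, w) = 6 := ((hce u w hu hw).1).trans S1
    have e2 : c s(w, β t) = 7 := ((hce (β t) w hbV1 hb2.symm).2).trans (S4 (β t) hb3)
    have e3 : c s(β t, t) = 8 := ((hce (β t) t hbV1 hb1.symm).1).trans (S6 t ht htw hnb)
    simp only [SimpleGraph.Walk.edges_cons, SimpleGraph.Walk.edges_nil, List.map_cons,
      List.map_nil, e1, e2, e3]
  have OUT_K : ∀ t : V, t ∈ V2 → t ≠ w → Blk t → ∃ q : G.Walk u t, q.edges.map c = [11] := by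
    intro t ht htw hb
    have hut : G.Adj u t := blkA ht htw hb
    refine ⟨.cons hut .nil, ?_⟩
    have e1 : c s(u, t) = 11 := ((hce u t hu hut).1).trans (S2 t htw hb)
    simp only [SimpleGraph.Walk.edges_cons, SimpleGraph.Walk.edges_nil, List.map_cons,
      List.map_nil, e1]
  have OUT_K2 : ∀ t : V, t ∈ V2 → t ≠ w → Blk t → ∃ q : G.Walk u t,
      q.edges.map c = [6, 7, 5] := by
    intro t ht htw hb
    obtain ⟨h1, h2, h3⟩ := hbt t ⟨ht, htw⟩
    have hbV1 : bt t ∈ V1 := adj21 ht h1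
    refine ⟨.cons hw (.cons h2 (.cons h1.symm .nil)), ?_⟩
    have e1 : c s(u, w) = 6 := ((hce u w hu hw).1).trans S1
    have e2 : c s(w, bt t) = 7 := ((hce (bt t) w hbV1 h2.symm).2).trans (S4 (bt t) h3)
    have e3 : c s(bt t, t) = 5 := ((hce (bt t) t hbV1 h1.symm).1).trans (S7 t ht htw hb)
    simp only [SimpleGraph.Walk.edges_cons, SimpleGraph.Walk.edges_nil, List.map_cons,
      List.map_nil, e1, e2, e3]
  have OUT_N : ∀ t : V, t ∈ V1 → t ≠ u → ¬ G.Adj w t → ¬ Blk (γ t) → ∃ q : G.Walk u t,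
      q.edges.map c = [6, 7, 8, 9] := by
    intro t htV1 htu hwt hnbg
    obtain ⟨hg1, hg2⟩ := hγ t ⟨htV1, htu⟩
    have hgV2 : γ t ∈ V2 := adj12 htV1 hg1
    have hgw : γ t ≠ w := by rintro h; exact hwt (h ▸ hg1).symm
    obtain ⟨hb1, hb2, hb3, hb4⟩ := hβ (γ t) ⟨hgV2, hgw, hnbg⟩
    have hbV1 : β (γ t) ∈ V1 := adj21 hgV2 hb1
    refine ⟨.cons hw (.cons hb2 (.cons hb1.symm (.cons hg1.symm .nil))), ?_⟩
    have e1 : c s(u, w) = 6 := ((hce u w hu hw).1).trans S1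
    have e2 : c s(w, β (γ t)) = 7 := ((hce (β (γ t)) w hbV1 hb2.symm).2).trans (S4 (β (γ t)) hb3)
    have e3 : c s(β (γ t), γ t) = 8 := ((hce (β (γ t)) (γ t) hbV1 hb1.symm).1).trans
      (S6 (γ t) hgV2 hgw hnbg)
    have e4 : c s(γ t, t) = 9 := ((hce t (γ t) htV1 hg1).2).trans (S8 t htV1 htu hwt)
    simp only [SimpleGraph.Walk.edges_cons, SimpleGraph.Walk.edges_nil, List.map_cons,
      List.map_nil, e1, e2, e3, e4]
  have OUT_Nb : ∀ t : V, t ∈ V1 → t ≠ u → ¬ G.Adj w t → Blk (γ t) → ∃ q : G.Walk u t,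
      q.edges.map c = [6, 7, 5, 9] := by
    intro t htV1 htu hwt hbg
    obtain ⟨hg1, hg2⟩ := hγ t ⟨htV1, htu⟩
    have hgV2 : γ t ∈ V2 := adj12 htV1 hg1
    have hgw : γ t ≠ w := by rintro h; exact hwt (h ▸ hg1).symm
    obtain ⟨h1, h2, h3⟩ := hbt (γ t) ⟨hgV2, hgw⟩
    have hbV1 : bt (γ t) ∈ V1 := adj21 hgV2 h1
    refine ⟨.cons hw (.cons h2 (.cons h1.symm (.cons hg1.symm .nil))), ?_⟩
    have e1 : c s(u, w) = 6 := ((hce u w hu hw).1).trans S1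
    have e2 : c s(w, bt (γ t)) = 7 := ((hce (bt (γ t)) w hbV1 h2.symm).2).trans (S4 (bt (γ t)) h3)
    have e3 : c s(bt (γ t), γ t) = 5 := ((hce (bt (γ t)) (γ t) hbV1 h1.symm).1).trans
      (S7 (γ t) hgV2 hgw hbg)
    have e4 : c s(γ t, t) = 9 := ((hce t (γ t) htV1 hg1).2).trans (S8 t htV1 htu hwt)
    simp only [SimpleGraph.Walk.edges_cons, SimpleGraph.Walk.edges_nil, List.map_cons,
      List.map_nil, e1, e2, e3, e4]
  have OUT_gk : ∀ t : V, t ∈ V1 → t ≠ u → ¬ G.Adj w t → Blk (γ t) → ∃ q : G.Walk u t,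
      q.edges.map c = [11, 9] := by
    intro t htV1 htu hwt hbg
    obtain ⟨hg1, hg2⟩ := hγ t ⟨htV1, htu⟩
    have hgV2 : γ t ∈ V2 := adj12 htV1 hg1
    have hgw : γ t ≠ w := by rintro h; exact hwt (h ▸ hg1).symm
    have hug : G.Adj u (γ t) := blkA hgV2 hgw hbg
    refine ⟨.cons hug (.cons hg1.symm .nil), ?_⟩
    have e1 : c s(u, γ t) = 11 := ((hce u (γ t) hu hug).1).trans (S2 (γ t) hgw hbg)
    have e2 : c s(γ t, t) = 9 := ((hce t (γ t) htV1 hg1).2).trans (S8 t htV1 htu hwt)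
    simp only [SimpleGraph.Walk.edges_cons, SimpleGraph.Walk.edges_nil, List.map_cons,
      List.map_nil, e1, e2]
  have OUT_at : ∀ t : V, t ∈ V1 → t ≠ u → ¬ G.Adj w t → ∃ q : G.Walk u t,
      q.edges.map c = [0, 1] ∨ q.edges.map c = [11, 1] := by
    intro t htV1 htu hwt
    obtain ⟨ha1, ha2, ha3⟩ := hα t ⟨htV1, htu⟩
    refine ⟨.cons ha2 (.cons ha1.symm .nil), ?_⟩
    have e2 : c s(α t, t) = 1 := by
      refine ((hce t (α t) htV1 ha1).2).trans ?_
      rcases S5 t htV1 htu with h | ⟨-, -, hcontra⟩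
      · exact h
      · exact absurd hcontra hwt
    have e1 : c s(u, α t) = d u (α t) := (hce u (α t) hu ha2).1
    rcases zsplit (α t) ha3 with hz | hz
    · left
      simp only [SimpleGraph.Walk.edges_cons, SimpleGraph.Walk.edges_nil, List.map_cons,
        List.map_nil, e1.trans hz, e2]
    · right
      simp only [SimpleGraph.Walk.edges_cons, SimpleGraph.Walk.edges_nil, List.map_cons,
        List.map_nil, e1.trans hz, e2]
  have IN_V1 : ∀ s : V, s ∈ V1 → s ≠ u → ∃ p : G.Walk s u,
      (p.edges.map c = [1, 0] ∨ p.edges.map c = [1, 11]) ∨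
      (G.Adj w s ∧ (∃ p' : G.Walk s u, p'.edges.map c = [5, 11]) ∧
        ∃ q : G.Walk s u, q.edges.map c = [7, 6]) := by
    intro s hs hsu
    obtain ⟨ha1, ha2, ha3⟩ := hα s ⟨hs, hsu⟩
    have e2 : c s(α s, u) = d u (α s) := (hce u (α s) hu ha2).2
    rcases S5 s hs hsu with h1 | ⟨h5, hblk, hws⟩
    · have e1 : c s(s, α s) = 1 := ((hce s (α s) hs ha1).1).trans h1
      refine ⟨.cons ha1 (.cons ha2.symm .nil), Or.inl ?_⟩
      rcases zsplit (α s) ha3 with hz | hz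
      · left
        simp only [SimpleGraph.Walk.edges_cons, SimpleGraph.Walk.edges_nil, List.map_cons,
      List.map_nil, e1, e2.trans hz]
      · right
        simp only [SimpleGraph.Walk.edges_cons, SimpleGraph.Walk.edges_nil, List.map_cons,
      List.map_nil, e1, e2.trans hz]
    · have e1 : c s(s, α s) = 5 := ((hce s (α s) hs ha1).1).trans h5
      have ez : c s(α s, u) = 11 := e2.trans (S2 (α s) ha3 hblk)
      have e3 : c s(s, w) = 7 := ((hce s w hs hws.symm).1).trans (S4 s hsu)
      have e4 : c s(w, u) = 6 := ((hce u w hu hw).2).trans S1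
      refine ⟨.cons ha1 (.cons ha2.symm .nil), Or.inr ⟨hws, ⟨.cons ha1 (.cons ha2.symm .nil), ?_⟩,
        ⟨.cons hws.symm (.cons hw.symm .nil), ?_⟩⟩⟩
      · simp only [SimpleGraph.Walk.edges_cons, SimpleGraph.Walk.edges_nil, List.map_cons,
      List.map_nil, e1, ez]
      · simp only [SimpleGraph.Walk.edges_cons, SimpleGraph.Walk.edges_nil, List.map_cons,
      List.map_nil, e3, e4]
  have IN_A : ∀ s : V, s ∈ V2 → s ≠ w → G.Adj u s → ∃ p : G.Walk s u,
      p.edges.map c = [0] ∨ p.edges.map c = [11] := by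
    intro s hs hsw hus
    have e1 : c s(s, u) = d u s := (hce u s hu hus).2
    refine ⟨.cons hus.symm .nil, ?_⟩
    rcases zsplit s hsw with hz | hz
    · left; simp only [SimpleGraph.Walk.edges_cons, SimpleGraph.Walk.edges_nil, List.map_cons,
      List.map_nil, e1.trans hz]
    · right; simp only [SimpleGraph.Walk.edges_cons, SimpleGraph.Walk.edges_nil, List.map_cons,
      List.map_nil, e1.trans hz]
  have IN_V2N : ∀ s : V, s ∈ V2 → ¬ G.Adj u s → ∃ p : G.Walk s u,
      p.edges.map c = [4, 1, 0] ∨ p.edges.map c = [4, 1, 11] ∨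
      p.edges.map c = [4, 5, 0] ∨ p.edges.map c = [4, 5, 11] := by
    intro s hs hus
    obtain ⟨hb1, hb2, hb3, hb4⟩ := hbb s ⟨hs, hus⟩
    have hbV1 : bb s ∈ V1 := adj21 hs hb1
    obtain ⟨hc1, hc2, hc3⟩ := hα (bb s) ⟨hbV1, hb4⟩
    refine ⟨.cons hb1 (.cons hc1 (.cons hc2.symm .nil)), ?_⟩
    have e1 : c s(s, bb s) = 4 :=
      ((hce (bb s) s hbV1 hb1.symm).2).trans (S9 s (bb s) hs hus hb1 hb2 hb3)
    have e2 : c s(bb s, α (bb s)) = d (bb s) (α (bb s)) := (hce (bb s) (α (bb s)) hbV1 hc1).1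
    have e3 : c s(α (bb s), u) = d u (α (bb s)) := (hce u (α (bb s)) hu hc2).2
    rcases S5 (bb s) hbV1 hb4 with h5 | ⟨h5, -, -⟩ <;>
      rcases zsplit (α (bb s)) hc3 with hz | hz <;>
        simp only [SimpleGraph.Walk.edges_cons, SimpleGraph.Walk.edges_nil, List.map_cons,
      List.map_nil, e1, e2.trans h5, e3.trans hz] <;> decide
  have IN_V2N5 : ∀ s : V, s ∈ V2 → ¬ G.Adj u s → ∃ p : G.Walk s u,
      p.edges.map c = [4, 7, 6] := by
    intro s hs hus
    obtain ⟨hb1, hb2, hb3, hb4⟩ := hbb s ⟨hs, hus⟩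
    have hbV1 : bb s ∈ V1 := adj21 hs hb1
    refine ⟨.cons hb1 (.cons hb2.symm (.cons hw.symm .nil)), ?_⟩
    have e1 : c s(s, bb s) = 4 :=
      ((hce (bb s) s hbV1 hb1.symm).2).trans (S9 s (bb s) hs hus hb1 hb2 hb3)
    have e2 : c s(bb s, w) = 7 := ((hce (bb s) w hbV1 hb2.symm).1).trans (S4 (bb s) hb4)
    have e3 : c s(w, u) = 6 := ((hce u w hu hw).2).trans S1
    simp only [SimpleGraph.Walk.edges_cons, SimpleGraph.Walk.edges_nil, List.map_cons,
      List.map_nil, e1, e2, e3]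
  have toW_V2N : ∀ s : V, s ∈ V2 → ¬ G.Adj u s → ∃ p : G.Walk s w,
      p.edges.map c = [4, 7] := by
    intro s hs hus
    obtain ⟨hb1, hb2, hb3, hb4⟩ := hbb s ⟨hs, hus⟩
    have hbV1 : bb s ∈ V1 := adj21 hs hb1
    refine ⟨.cons hb1 (.cons hb2.symm .nil), ?_⟩
    have e1 : c s(s, bb s) = 4 :=
      ((hce (bb s) s hbV1 hb1.symm).2).trans (S9 s (bb s) hs hus hb1 hb2 hb3)
    have e2 : c s(bb s, w) = 7 := ((hce (bb s) w hbV1 hb2.symm).1).trans (S4 (bb s) hb4)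
    simp only [SimpleGraph.Walk.edges_cons, SimpleGraph.Walk.edges_nil, List.map_cons,
      List.map_nil, e1, e2]
  have W_V1N : ∀ t : V, t ∈ V1 → t ≠ u → ¬ G.Adj w t → ∃ p : G.Walk w t,
      p.edges.map c = [7, 8, 9] ∨ p.edges.map c = [6, 11, 9] := by
    intro t htV1 htu hwt
    obtain ⟨hg1, hg2⟩ := hγ t ⟨htV1, htu⟩
    have hgV2 : γ t ∈ V2 := adj12 htV1 hg1
    have hgw : γ t ≠ w := by rintro h; exact hwt (h ▸ hg1).symm
    have e9 : c s(γ t, t) = 9 := ((hce t (γ t) htV1 hg1).2).trans (S8 t htV1 htu hwt)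
    by_cases hbg : Blk (γ t)
    · have hug : G.Adj u (γ t) := blkA hgV2 hgw hbg
      refine ⟨.cons hw.symm (.cons hug (.cons hg1.symm .nil)), Or.inr ?_⟩
      have e1 : c s(w, u) = 6 := ((hce u w hu hw).2).trans S1
      have e2 : c s(u, γ t) = 11 := ((hce u (γ t) hu hug).1).trans (S2 (γ t) hgw hbg)
      simp only [SimpleGraph.Walk.edges_cons, SimpleGraph.Walk.edges_nil, List.map_cons,
      List.map_nil, e1, e2, e9]
    · obtain ⟨hb1, hb2, hb3, hb4⟩ := hβ (γ t) ⟨hgV2, hgw, hbg⟩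
      have hbV1 : β (γ t) ∈ V1 := adj21 hgV2 hb1
      refine ⟨.cons hb2 (.cons hb1.symm (.cons hg1.symm .nil)), Or.inl ?_⟩
      have e1 : c s(w, β (γ t)) = 7 := ((hce (β (γ t)) w hbV1 hb2.symm).2).trans (S4 _ hb3)
      have e2 : c s(β (γ t), γ t) = 8 :=
        ((hce (β (γ t)) (γ t) hbV1 hb1.symm).1).trans (S6 _ hgV2 hgw hbg)
      simp only [SimpleGraph.Walk.edges_cons, SimpleGraph.Walk.edges_nil, List.map_cons,
      List.map_nil, e1, e2, e9]
  have W_V2 : ∀ t : V, t ∈ V2 → t ≠ w → ∃ p : G.Walk w t,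
      p.edges.map c = [7, 8] ∨ p.edges.map c = [6, 11] := by
    intro t ht htw
    by_cases hb : Blk t
    · have hut := blkA ht htw hb
      refine ⟨.cons hw.symm (.cons hut .nil), Or.inr ?_⟩
      have e1 : c s(w, u) = 6 := ((hce u w hu hw).2).trans S1
      have e2 : c s(u, t) = 11 := ((hce u t hu hut).1).trans (S2 t htw hb)
      simp only [SimpleGraph.Walk.edges_cons, SimpleGraph.Walk.edges_nil, List.map_cons,
      List.map_nil, e1, e2]
    · obtain ⟨hb1, hb2, hb3, hb4⟩ := hβ t ⟨ht, htw, hb⟩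
      have hbV1 : β t ∈ V1 := adj21 ht hb1
      refine ⟨.cons hb2 (.cons hb1.symm .nil), Or.inl ?_⟩
      have e1 : c s(w, β t) = 7 := ((hce (β t) w hbV1 hb2.symm).2).trans (S4 _ hb3)
      have e2 : c s(β t, t) = 8 := ((hce (β t) t hbV1 hb1.symm).1).trans (S6 t ht htw hb)
      simp only [SimpleGraph.Walk.edges_cons, SimpleGraph.Walk.edges_nil, List.map_cons,
      List.map_nil, e1, e2]
  have comp : ∀ {x y z : V} (p : G.Walk x y) (q : G.Walk y z) {l1 l2 : List (Fin 12)},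
      p.edges.map c = l1 → q.edges.map c = l2 → (p.append q).edges.map c = l1 ++ l2 := by
    intro x y z p q l1 l2 h1 h2
    rw [SimpleGraph.Walk.edges_append, List.map_append, h1, h2]
  have key : ∀ s t : V, s ≠ t → ∃ p : G.Walk s t, (p.edges.map c).Nodup := by
    intro s t hst
    by_cases hadj : G.Adj s t
    · exact ⟨.cons hadj .nil, by simp⟩
    by_cases hsu : s = u
    · subst hsu
      rcases hcover t with htV1 | htV2
      · by_cases hwt : G.Adj w t
        · obtain ⟨q, hq⟩ := OUT_B t hwt (Ne.symm hst)
          exact ⟨q, by rw [hq]; decide⟩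
        · by_cases hbg : Blk (γ t)
          · obtain ⟨q, hq⟩ := OUT_Nb t htV1 (Ne.symm hst) hwt hbg
            exact ⟨q, by rw [hq]; decide⟩
          · obtain ⟨q, hq⟩ := OUT_N t htV1 (Ne.symm hst) hwt hbg
            exact ⟨q, by rw [hq]; decide⟩
      · have htw : t ≠ w := by rintro rfl; exact hadj hw
        have hnb : ¬ Blk t := fun hb => hadj (blkA htV2 htw hb)
        obtain ⟨q, hq⟩ := OUT_V2 t htV2 htw hnb
        exact ⟨q, by rw [hq]; decide⟩
    by_cases htu : t = u
    · rcases hcover s with hsV1 | hsV2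
      · obtain ⟨p, hp⟩ := IN_V1 s hsV1 hsu
        rcases hp with (hp | hp) | ⟨-, ⟨p', hp'⟩, -⟩
        · exact ⟨p.copy rfl htu.symm, by rw [SimpleGraph.Walk.edges_copy, hp]; decide⟩
        · exact ⟨p.copy rfl htu.symm, by rw [SimpleGraph.Walk.edges_copy, hp]; decide⟩
        · exact ⟨p'.copy rfl htu.symm, by rw [SimpleGraph.Walk.edges_copy, hp']; decide⟩
      · have hus : ¬ G.Adj u s := fun h => hadj (htu ▸ h.symm)
        obtain ⟨p, hp⟩ := IN_V2N5 s hsV2 hus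
        exact ⟨p.copy rfl htu.symm, by rw [SimpleGraph.Walk.edges_copy, hp]; decide⟩
    by_cases hsw : s = w
    · subst hsw
      rcases hcover t with htV1 | htV2
      · have htu2 : t ≠ u := htu
        obtain ⟨p, hp⟩ := W_V1N t htV1 htu2 hadj
        rcases hp with hp | hp <;> exact ⟨p, by rw [hp]; decide⟩
      · obtain ⟨p, hp⟩ := W_V2 t htV2 (Ne.symm hst)
        rcases hp with hp | hp <;> exact ⟨p, by rw [hp]; decide⟩
    by_cases htw : t = w
    · subst htw
      rcases hcover s with hsV1 | hsV2
      · obtain ⟨p, hp⟩ := IN_V1 s hsV1 hsu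
        obtain ⟨q, hq⟩ := OUT_w
        rcases hp with (hp | hp) | ⟨hws, -, -⟩
        · exact ⟨p.append q, by rw [comp p q hp hq]; decide⟩
        · exact ⟨p.append q, by rw [comp p q hp hq]; decide⟩
        · exact absurd hws.symm hadj
      · by_cases hus : G.Adj u s
        · obtain ⟨p, hp⟩ := IN_A s hsV2 hst hus
          obtain ⟨q, hq⟩ := OUT_w
          rcases hp with hp | hp <;> exact ⟨p.append q, by rw [comp p q hp hq]; decide⟩
        · obtain ⟨p, hp⟩ := toW_V2N s hsV2 hus
          exact ⟨p, by rw [hp]; decide⟩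
    rcases hcover s with hsV1 | hsV2 <;> rcases hcover t with htV1 | htV2
    · -- s ∈ V1, t ∈ V1
      by_cases hwt : G.Adj w t
      · obtain ⟨p, hp⟩ := IN_V1 s hsV1 hsu
        obtain ⟨q, hq⟩ := OUT_B t hwt htu
        rcases hp with (hp | hp) | ⟨-, ⟨p', hp'⟩, -⟩
        · exact ⟨p.append q, by rw [comp p q hp hq]; decide⟩
        · exact ⟨p.append q, by rw [comp p q hp hq]; decide⟩
        · exact ⟨p'.append q, by rw [comp p' q hp' hq]; decide⟩
      · obtain ⟨p, hp⟩ := IN_V1 s hsV1 hsu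
        rcases hp with (hp | hp) | ⟨hws, -, ⟨q', hq'⟩⟩
        · by_cases hbg : Blk (γ t)
          · obtain ⟨q, hq⟩ := OUT_Nb t htV1 htu hwt hbg
            exact ⟨p.append q, by rw [comp p q hp hq]; decide⟩
          · obtain ⟨q, hq⟩ := OUT_N t htV1 htu hwt hbg
            exact ⟨p.append q, by rw [comp p q hp hq]; decide⟩
        · by_cases hbg : Blk (γ t)
          · obtain ⟨q, hq⟩ := OUT_Nb t htV1 htu hwt hbg
            exact ⟨p.append q, by rw [comp p q hp hq]; decide⟩
          · obtain ⟨q, hq⟩ := OUT_N t htV1 htu hwt hbg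
            exact ⟨p.append q, by rw [comp p q hp hq]; decide⟩
        · obtain ⟨q, hq⟩ := OUT_at t htV1 htu hwt
          rcases hq with hq | hq <;>
            exact ⟨q'.append q, by rw [comp q' q hq' hq]; decide⟩
    · -- s ∈ V1, t ∈ V2
      by_cases hbt2 : Blk t
      · obtain ⟨p, hp⟩ := IN_V1 s hsV1 hsu
        rcases hp with (hp | hp) | ⟨hws, -, ⟨q', hq'⟩⟩
        · obtain ⟨q, hq⟩ := OUT_K t htV2 htw hbt2
          exact ⟨p.append q, by rw [comp p q hp hq]; decide⟩
        · obtain ⟨q, hq⟩ := OUT_K2 t htV2 htw hbt2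
          exact ⟨p.append q, by rw [comp p q hp hq]; decide⟩
        · obtain ⟨q, hq⟩ := OUT_K t htV2 htw hbt2
          exact ⟨q'.append q, by rw [comp q' q hq' hq]; decide⟩
      · obtain ⟨p, hp⟩ := IN_V1 s hsV1 hsu
        obtain ⟨q, hq⟩ := OUT_V2 t htV2 htw hbt2
        rcases hp with (hp | hp) | ⟨-, ⟨p', hp'⟩, -⟩
        · exact ⟨p.append q, by rw [comp p q hp hq]; decide⟩
        · exact ⟨p.append q, by rw [comp p q hp hq]; decide⟩
        · exact ⟨p'.append q, by rw [comp p' q hp' hq]; decide⟩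
    · -- s ∈ V2, t ∈ V1
      by_cases hus : G.Adj u s
      · obtain ⟨p, hp⟩ := IN_A s hsV2 hsw hus
        by_cases hwt : G.Adj w t
        · obtain ⟨q, hq⟩ := OUT_B t hwt htu
          rcases hp with hp | hp <;> exact ⟨p.append q, by rw [comp p q hp hq]; decide⟩
        · by_cases hbg : Blk (γ t)
          · obtain ⟨q, hq⟩ := OUT_Nb t htV1 htu hwt hbg
            rcases hp with hp | hp <;> exact ⟨p.append q, by rw [comp p q hp hq]; decide⟩
          · obtain ⟨q, hq⟩ := OUT_N t htV1 htu hwt hbg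
            rcases hp with hp | hp <;> exact ⟨p.append q, by rw [comp p q hp hq]; decide⟩
      · by_cases hwt : G.Adj w t
        · obtain ⟨p, hp⟩ := IN_V2N s hsV2 hus
          obtain ⟨q, hq⟩ := OUT_B t hwt htu
          rcases hp with hp | hp | hp | hp <;>
            exact ⟨p.append q, by rw [comp p q hp hq]; decide⟩
        · by_cases hbg : Blk (γ t)
          · obtain ⟨p, hp⟩ := IN_V2N5 s hsV2 hus
            obtain ⟨q, hq⟩ := OUT_gk t htV1 htu hwt hbg
            exact ⟨p.append q, by rw [comp p q hp hq]; decide⟩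
          · obtain ⟨p, hp⟩ := IN_V2N s hsV2 hus
            obtain ⟨q, hq⟩ := OUT_N t htV1 htu hwt hbg
            rcases hp with hp | hp | hp | hp <;>
              exact ⟨p.append q, by rw [comp p q hp hq]; decide⟩
    · -- s ∈ V2, t ∈ V2
      by_cases hbt2 : Blk t
      · by_cases hus : G.Adj u s
        · obtain ⟨p, hp⟩ := IN_A s hsV2 hsw hus
          rcases hp with hp | hp
          · obtain ⟨q, hq⟩ := OUT_K t htV2 htw hbt2
            exact ⟨p.append q, by rw [comp p q hp hq]; decide⟩
          · obtain ⟨q, hq⟩ := OUT_K2 t htV2 htw hbt2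
            exact ⟨p.append q, by rw [comp p q hp hq]; decide⟩
        · obtain ⟨p, hp⟩ := IN_V2N5 s hsV2 hus
          obtain ⟨q, hq⟩ := OUT_K t htV2 htw hbt2
          exact ⟨p.append q, by rw [comp p q hp hq]; decide⟩
      · obtain ⟨q, hq⟩ := OUT_V2 t htV2 htw hbt2
        by_cases hus : G.Adj u s
        · obtain ⟨p, hp⟩ := IN_A s hsV2 hsw hus
          rcases hp with hp | hp <;> exact ⟨p.append q, by rw [comp p q hp hq]; decide⟩
        · obtain ⟨p, hp⟩ := IN_V2N s hsV2 hus
          rcases hp with hp | hp | hp | hp <;>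
            exact ⟨p.append q, by rw [comp p q hp hq]; decide⟩
  refine ⟨c, ?_⟩
  intro x y hxy
  obtain ⟨p, hp⟩ := key x y hxy
  refine ⟨p.bypass, p.bypass_isPath, ?_⟩
  refine List.Nodup.map_on ?_ p.bypass_isPath.isTrail.edges_nodup
  intro a ha b hb hab
  exact List.inj_on_of_nodup_map hp (p.edges_bypass_subset ha) (p.edges_bypass_subset hb) hab
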